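/- arXiv:2010.00205 — 2 statements merged into one kernel-verified Lean document; each statement's English description precedes it below -/
import Mathlib

section
/- Continuity/bootstrap lemma: Let S : [0,∞) → [0,∞) be continuous with S(0) ≤ ε, and suppose there exist constants c₁,c₂,c₃,c₄ ≥ 1, a₀ > 0, T > 0, κ ∈ (0,1) and λ > 0 such that (i) sup_{τ≤T} S(τ) ≤ c(S(0)+λ) for a constant c ≥ 1, (ii) e^{-a₀T/4} ≤ κ a₀/c₄, and (iii) for all T/2 ≤ τ* ≤ τ with S bounded on [τ*,τ]: sup_{τ*≤τ'≤τ} S(τ') ≤ c₁ S(τ*) + c₂ λ + c₃ S(0) + c₄ ∫_{τ*}^{τ} e^{-a₀ τ'} sup_{τ*≤s≤τ'} S(s) dτ'. Then with C* = 3(c₁c + c₂ + c₃) and κ small enough that 2(c₁c+c₂+c₃)/(1-κ) < C*, one has S(τ) < C*(S(0) + λ) for all τ ≥ T/2. -/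
open Real

set_option maxHeartbeats 1000000 in
/-- Continuity/bootstrap lemma. Under the local bound, the smallness
condition on `e^{-a₀T/4}`, and the Grönwall-type energy inequality for suprema on
`[τ*,τ]`, the uniform bound `S(τ) < C*(S(0)+λ)` holds for all `τ ≥ T/2`, where
`C* = 3(c₁c + c₂ + c₃)`. -/
theorem stmt18 (S : ℝ → ℝ) (c c₁ c₂ c₃ c₄ a₀ T κ lam ε : ℝ)
    (hScont : Continuous S) (hSnonneg : ∀ τ, 0 ≤ S τ)
    (hS0 : S 0 ≤ ε)
    (hc : 1 ≤ c) (hc₁ : 1 ≤ c₁) (hc₂ : 1 ≤ c₂) (hc₃ : 1 ≤ c₃) (hc₄ : 1 ≤ c₄)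
    (ha₀ : 0 < a₀) (hT : 0 < T) (hκ : 0 < κ) (hκ1 : κ < 1) (hlam : 0 < lam)
    (hlocal : ∀ τ ∈ Set.Icc 0 T, S τ ≤ c * (S 0 + lam))
    (hsmall : Real.exp (-a₀ * T / 4) ≤ κ * a₀ / c₄)
    (hgronwall : ∀ τstar τ : ℝ, T / 2 ≤ τstar → τstar ≤ τ →
      sSup (S '' Set.Icc τstar τ) ≤ c₁ * S τstar + c₂ * lam + c₃ * S 0
        + c₄ * ∫ τ' in τstar..τ, Real.exp (-a₀ * τ') * sSup (S '' Set.Icc τstar τ'))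
    (hκsmall : 2 * (c₁ * c + c₂ + c₃) / (1 - κ) < 3 * (c₁ * c + c₂ + c₃)) :
    ∀ τ ≥ T / 2, S τ < 3 * (c₁ * c + c₂ + c₃) * (S 0 + lam) := by
  intro τ hτ
  have hA0 : 0 < S 0 + lam := by have := hSnonneg 0; linarith
  have hM1 : (1:ℝ) ≤ c₁ * c + c₂ + c₃ := by nlinarith
  have hτ2 : T / 2 ≤ τ := hτ
  have hmemτ : τ ∈ Set.Icc (T/2) τ := ⟨hτ2, le_rfl⟩
  have hbdd : BddAbove (S '' Set.Icc (T/2) τ) := (isCompact_Icc.image hScont).bddAbove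
  set F := sSup (S '' Set.Icc (T/2) τ) with hF
  have hSτF : S τ ≤ F := le_csSup hbdd ⟨τ, hmemτ, rfl⟩
  have hF0 : 0 ≤ F := le_trans (hSnonneg τ) hSτF
  have hsupmono : ∀ τ' ∈ Set.Icc (T/2) τ, sSup (S '' Set.Icc (T/2) τ') ≤ F := by
    intro τ' hτ'
    exact csSup_le_csSup hbdd ⟨S τ', ⟨τ', ⟨hτ'.1, le_rfl⟩, rfl⟩⟩
      (Set.image_mono (Set.Icc_subset_Icc le_rfl hτ'.2))
  -- integrability
  have hmonoOn : MonotoneOn (fun τ' => sSup (S '' Set.Icc (T/2) τ')) (Set.uIcc (T/2) τ) := by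
    rw [Set.uIcc_of_le hτ2]
    intro s hs t ht hst
    exact csSup_le_csSup (isCompact_Icc.image hScont).bddAbove
      ⟨S s, ⟨s, ⟨hs.1, le_rfl⟩, rfl⟩⟩
      (Set.image_mono (Set.Icc_subset_Icc le_rfl hst))
  have hint : IntervalIntegrable (fun τ' => Real.exp (-a₀ * τ') * sSup (S '' Set.Icc (T/2) τ'))
      MeasureTheory.volume (T/2) τ :=
    hmonoOn.intervalIntegrable.continuousOn_mul
      ((Real.continuous_exp.comp (continuous_const.mul continuous_id)).continuousOn)
  have hint2 : IntervalIntegrable (fun τ' => Real.exp (-a₀ * τ') * F)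
      MeasureTheory.volume (T/2) τ :=
    Continuous.intervalIntegrable ((Real.continuous_exp.comp (continuous_const.mul continuous_id)).mul continuous_const) _ _
  -- bound the integral pointwise
  have hIle : (∫ τ' in (T/2)..τ, Real.exp (-a₀ * τ') * sSup (S '' Set.Icc (T/2) τ'))
      ≤ ∫ τ' in (T/2)..τ, Real.exp (-a₀ * τ') * F := by
    apply intervalIntegral.integral_mono_on hτ2 hint hint2
    intro x hx
    exact mul_le_mul_of_nonneg_left (hsupmono x hx) (Real.exp_pos _).le
  -- compute the exponential integral
  have hderiv : ∀ x ∈ Set.uIcc (T/2) τ,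
      HasDerivAt (fun y => -Real.exp (-a₀ * y) / a₀) (Real.exp (-a₀ * x)) x := by
    intro x _
    have h1 : HasDerivAt (fun y : ℝ => -a₀ * y) (-a₀) x := by
      simpa using (hasDerivAt_id x).const_mul (-a₀)
    have h2 : HasDerivAt (fun y => Real.exp (-a₀ * y)) (Real.exp (-a₀ * x) * (-a₀)) x :=
      (Real.hasDerivAt_exp _).comp x h1
    have h3 := (h2.neg).div_const a₀
    refine (h3 : HasDerivAt (fun y => -Real.exp (-a₀ * y) / a₀) _ x).congr_deriv ?_
    rw [div_eq_iff ha₀.ne']; ring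
  have hexpint : (∫ τ' in (T/2)..τ, Real.exp (-a₀ * τ'))
      = -Real.exp (-a₀ * τ) / a₀ - (-Real.exp (-a₀ * (T/2)) / a₀) :=
    intervalIntegral.integral_eq_sub_of_hasDerivAt hderiv
      (Continuous.intervalIntegrable (Real.continuous_exp.comp (continuous_const.mul continuous_id)) _ _)
  have hIle2 : (∫ τ' in (T/2)..τ, Real.exp (-a₀ * τ') * F)
      ≤ Real.exp (-a₀ * (T/2)) / a₀ * F := by
    rw [intervalIntegral.integral_mul_const, hexpint]
    have h5 : 0 < Real.exp (-a₀ * τ) / a₀ := by positivity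
    have h4 : -Real.exp (-a₀ * τ) / a₀ - (-Real.exp (-a₀ * (T/2)) / a₀)
        ≤ Real.exp (-a₀ * (T/2)) / a₀ := by
      rw [neg_div, neg_div]; linarith
    exact mul_le_mul_of_nonneg_right h4 hF0
  -- smallness
  have hexp1 : Real.exp (-a₀ * T / 4) ≤ 1 := Real.exp_le_one_iff.mpr (by nlinarith)
  have hexp2 : Real.exp (-a₀ * (T/2)) = Real.exp (-a₀ * T / 4) * Real.exp (-a₀ * T / 4) := by
    rw [← Real.exp_add]; ring_nf
  have hexppos : 0 < Real.exp (-a₀ * T / 4) := Real.exp_pos _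
  have hc₄0 : (0:ℝ) < c₄ := by linarith
  have hsmall' : Real.exp (-a₀ * T / 4) * c₄ ≤ κ * a₀ := by
    rw [le_div_iff₀ hc₄0] at hsmall
    exact hsmall
  have hsmall2 : c₄ * (Real.exp (-a₀ * (T/2)) / a₀) ≤ κ := by
    rw [hexp2]
    rw [mul_div_assoc', div_le_iff₀ ha₀]
    have t1 : Real.exp (-a₀ * T / 4) * c₄ * Real.exp (-a₀ * T / 4)
        ≤ κ * a₀ * Real.exp (-a₀ * T / 4) :=
      mul_le_mul_of_nonneg_right hsmall' hexppos.le
    have t2 : κ * a₀ * Real.exp (-a₀ * T / 4) ≤ κ * a₀ * 1 :=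
      mul_le_mul_of_nonneg_left hexp1 (by positivity)
    nlinarith [t1, t2]
  -- assemble
  have hg := hgronwall (T/2) τ le_rfl hτ2
  have hST2 : S (T/2) ≤ c * (S 0 + lam) := hlocal (T/2) ⟨by linarith, by linarith⟩
  have hfin : F ≤ (c₁ * c + c₂ + c₃) * (S 0 + lam) + κ * F := by
    have hc₄I : c₄ * (∫ τ' in (T/2)..τ, Real.exp (-a₀ * τ') * sSup (S '' Set.Icc (T/2) τ'))
        ≤ κ * F := by
      calc c₄ * (∫ τ' in (T/2)..τ, Real.exp (-a₀ * τ') * sSup (S '' Set.Icc (T/2) τ'))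
          ≤ c₄ * (Real.exp (-a₀ * (T/2)) / a₀ * F) :=
            mul_le_mul_of_nonneg_left (le_trans hIle hIle2) hc₄0.le
        _ = c₄ * (Real.exp (-a₀ * (T/2)) / a₀) * F := by ring
        _ ≤ κ * F := mul_le_mul_of_nonneg_right hsmall2 hF0
    have e1 : c₁ * S (T/2) ≤ c₁ * (c * (S 0 + lam)) :=
      mul_le_mul_of_nonneg_left hST2 (by linarith)
    have e2 : c₂ * lam ≤ c₂ * (S 0 + lam) :=
      mul_le_mul_of_nonneg_left (by linarith [hSnonneg 0]) (by linarith)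
    have e3 : c₃ * S 0 ≤ c₃ * (S 0 + lam) :=
      mul_le_mul_of_nonneg_left (by linarith) (by linarith)
    have : (c₁ * c + c₂ + c₃) * (S 0 + lam)
        = c₁ * (c * (S 0 + lam)) + c₂ * (S 0 + lam) + c₃ * (S 0 + lam) := by ring
    rw [this]
    linarith [hg, hc₄I, e1, e2, e3]
  have h1κ : (0:ℝ) < 1 - κ := by linarith
  rw [div_lt_iff₀ h1κ] at hκsmall
  have q0 : (1 - κ) * F ≤ (c₁ * c + c₂ + c₃) * (S 0 + lam) := by linarith [hfin]
  have q1 : 2 * (c₁ * c + c₂ + c₃) * (S 0 + lam)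
      < 3 * (c₁ * c + c₂ + c₃) * (1 - κ) * (S 0 + lam) :=
    mul_lt_mul_of_pos_right hκsmall hA0
  have q2 : (1 - κ) * (2 * F) < (1 - κ) * (3 * (c₁ * c + c₂ + c₃) * (S 0 + lam)) := by
    linarith [q0, q1]
  have q3 : 2 * F < 3 * (c₁ * c + c₂ + c₃) * (S 0 + lam) :=
    (mul_lt_mul_iff_right₀ h1κ).mp q2
  linarith [hSτF, hF0]
end

section
/- If a(t) is a positive C² solution of a'' = a^{2-3γ} on [0,∞) with γ > 5/3, a(0) = α > 0, a'(0) = β, then there exist constants a₀, a₁ ∈ ℝ with a₁ > 0 and a function m(t) with |m(t)| = o(1+t) as t → ∞ and |m'(t)| ≲ (1+t)^{3-3γ}, such that a(t) = a₀ + t a₁ + m(t); in particular a(t)/t → a₁ as t → ∞. -/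
open Real Filter

private lemma myMonoOn (f f' : ℝ → ℝ) (x0 : ℝ) (hf : ∀ t ≥ x0, HasDerivAt f (f' t) t)
    (h0 : ∀ t ≥ x0, 0 ≤ f' t) : MonotoneOn f (Set.Ici x0) := by
  apply monotoneOn_of_deriv_nonneg (convex_Ici x0)
  · exact fun t ht => (hf t ht).continuousAt.continuousWithinAt
  · intro t ht
    rw [interior_Ici] at ht
    exact ((hf t ht.le).differentiableAt).differentiableWithinAt
  · intro t ht
    rw [interior_Ici] at ht
    rw [(hf t ht.le).deriv]
    exact h0 t ht.le

private lemma myAntiOn (f f' : ℝ → ℝ) (x0 : ℝ) (hf : ∀ t ≥ x0, HasDerivAt f (f' t) t)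
    (h0 : ∀ t ≥ x0, f' t ≤ 0) : AntitoneOn f (Set.Ici x0) := by
  apply antitoneOn_of_deriv_nonpos (convex_Ici x0)
  · exact fun t ht => (hf t ht).continuousAt.continuousWithinAt
  · intro t ht
    rw [interior_Ici] at ht
    exact ((hf t ht.le).differentiableAt).differentiableWithinAt
  · intro t ht
    rw [interior_Ici] at ht
    rw [(hf t ht.le).deriv]
    exact h0 t ht.le

private lemma myDerivPow (p x : ℝ) (hx : 0 < 1 + x) :
    HasDerivAt (fun t => (1+t)^p) (p * (1+x)^(p-1)) x := by
  have := (Real.hasDerivAt_rpow_const (x := 1+x) (p := p) (Or.inl hx.ne')).comp x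
    ((hasDerivAt_id x).const_add 1)
  simpa [Function.comp_def] using this

/-- For `γ > 5/3`, a positive C² solution of `a'' = a^{2-3γ}` with
`a(0) = α > 0`, `a'(0) = β` satisfies `a(t) = a₀ + t a₁ + m(t)` with `a₁ > 0`,
`|m(t)| = o(1+t)` and `|m'(t)| = |a'(t) - a₁| ≲ (1+t)^{3-3γ}`; in particular
`a(t)/t → a₁`. -/
theorem stmt19 (γ α β : ℝ) (hγ : 5 / 3 < γ) (a a' : ℝ → ℝ)
    (hpos : ∀ t ≥ (0:ℝ), 0 < a t)
    (hα : a 0 = α) (hαpos : 0 < α) (hβ : a' 0 = β)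
    (hda : ∀ t ≥ (0:ℝ), HasDerivAt a (a' t) t)
    (hda' : ∀ t ≥ (0:ℝ), HasDerivAt a' (a t ^ (2 - 3 * γ)) t) :
    ∃ a₀ a₁ : ℝ, 0 < a₁ ∧
      (∃ C > (0:ℝ), ∀ t ≥ (0:ℝ), |a' t - a₁| ≤ C * (1 + t) ^ (3 - 3 * γ)) ∧
      Tendsto (fun t => (a t - a₀ - t * a₁) / (1 + t)) atTop (nhds 0) ∧
      Tendsto (fun t => a t / t) atTop (nhds a₁) := by
  have hp : (2 - 3*γ) < 0 := by linarith
  have hrpos : ∀ t ≥ (0:ℝ), 0 < a t ^ (2-3*γ) := fun t ht => rpow_pos_of_pos (hpos t ht) _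
  have hmono' : MonotoneOn a' (Set.Ici 0) :=
    myMonoOn a' _ 0 hda' (fun t ht => (hrpos t ht).le)
  -- Step 1: the velocity is positive somewhere
  have hex : ∃ t0 ≥ (0:ℝ), 0 < a' t0 := by
    by_contra hcon
    push_neg at hcon
    have hanti : AntitoneOn a (Set.Ici 0) := myAntiOn a a' 0 hda hcon
    have hle : ∀ t ≥ (0:ℝ), a t ≤ α := fun t ht => hα ▸ hanti Set.self_mem_Ici ht ht
    have hcpos : 0 < α ^ (2-3*γ) := rpow_pos_of_pos hαpos _
    set c := α ^ (2-3*γ) with hc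
    have hmono2 : MonotoneOn (fun t => a' t - c * t) (Set.Ici 0) := by
      apply myMonoOn _ (fun t => a t ^ (2-3*γ) - c) 0
      · intro t ht
        exact (hda' t ht).sub (by simpa using (hasDerivAt_id t).const_mul c)
      · intro t ht
        have := Real.rpow_le_rpow_of_nonpos (hpos t ht) (hle t ht) hp.le
        simp only [← hc] at this ⊢
        linarith
    set T := max 0 ((1-β)/c) with hT
    have hT0 : (0:ℝ) ≤ T := le_max_left _ _
    have h1 : a' 0 - c*0 ≤ a' T - c*T := hmono2 Set.self_mem_Ici hT0 hT0
    have h2 : (1-β)/c ≤ T := le_max_right _ _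
    have h3 : 1 - β ≤ c*T := by
      rw [div_le_iff₀ hcpos] at h2
      nlinarith
    have h4 := hcon T hT0
    rw [hβ] at h1
    linarith
  obtain ⟨t0, ht0, ht0pos⟩ := hex
  set c := a' t0 with hcdef
  -- minimum of a on [0, t0]
  have hcont : ContinuousOn a (Set.Icc 0 t0) :=
    fun s hs => (hda s hs.1).continuousAt.continuousWithinAt
  obtain ⟨x, hx, hxmin⟩ := isCompact_Icc.exists_isMinOn (Set.nonempty_Icc.mpr ht0) hcont
  have hxmin' : ∀ y ∈ Set.Icc (0:ℝ) t0, a x ≤ a y := fun y hy => hxmin hy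
  have hμpos : 0 < a x := hpos x hx.1
  set μ := a x with hμ
  -- the linear lower bound
  set δ := min c (μ/(1+t0)) with hδdef
  have h1t0 : (0:ℝ) < 1 + t0 := by linarith
  have hδpos : 0 < δ := lt_min ht0pos (div_pos hμpos h1t0)
  have hδμ : δ * (1+t0) ≤ μ := by
    have : δ ≤ μ/(1+t0) := min_le_right _ _
    rw [le_div_iff₀ h1t0] at this
    linarith
  have hδc : δ ≤ c := min_le_left _ _
  have hδ : ∀ t ≥ (0:ℝ), δ * (1+t) ≤ a t := by
    intro t ht
    rcases le_total t t0 with h | h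
    · have hμt : μ ≤ a t := hxmin' t ⟨ht, h⟩
      nlinarith
    · -- a t ≥ a t0 + c (t - t0)
      have hmono3 : MonotoneOn (fun s => a s - c*s) (Set.Ici t0) := by
        apply myMonoOn _ (fun s => a' s - c) t0
        · intro s hs
          exact (hda s (le_trans ht0 hs)).sub (by simpa using (hasDerivAt_id s).const_mul c)
        · intro s hs
          have : a' t0 ≤ a' s := hmono' (Set.mem_Ici.mpr ht0) (Set.mem_Ici.mpr (le_trans ht0 hs)) hs
          linarith
      have h4 : a t0 - c*t0 ≤ a t - c*t := hmono3 Set.self_mem_Ici h h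
      have h5 : μ ≤ a t0 := hxmin' t0 ⟨ht0, le_refl _⟩
      nlinarith
  -- the comparison function g
  have h3γ : (0:ℝ) < 3*γ - 3 := by linarith
  set C := δ^(2-3*γ) / (3*γ-3) with hCdef
  have hCpos : 0 < C := div_pos (rpow_pos_of_pos hδpos _) h3γ
  have hg' : ∀ t ≥ (0:ℝ), HasDerivAt (fun s => C * (1+s)^(3-3*γ))
      (-(δ^(2-3*γ) * (1+t)^(2-3*γ))) t := by
    intro t ht
    have h1t : (0:ℝ) < 1 + t := by linarith
    have hder := (myDerivPow (3-3*γ) t h1t).const_mul C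
    have heq : C * ((3-3*γ) * (1+t)^(3-3*γ-1)) = -(δ^(2-3*γ) * (1+t)^(2-3*γ)) := by
      have : (3-3*γ-1 : ℝ) = 2-3*γ := by ring
      rw [this, hCdef]
      have hne : (3*γ-3) ≠ 0 := h3γ.ne'
      have hne2 : γ - 1 ≠ 0 := by intro h; linarith
      have hne3 : -1 + γ ≠ 0 := by intro h; linarith
      field_simp
      ring
    rw [heq] at hder
    exact hder
  -- h = a' + g is antitone
  have hhanti : AntitoneOn (fun s => a' s + C * (1+s)^(3-3*γ)) (Set.Ici 0) := by
    apply myAntiOn _ (fun s => a s ^ (2-3*γ) - δ^(2-3*γ) * (1+s)^(2-3*γ)) 0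
    · intro t ht
      have := (hda' t ht).add (hg' t ht)
      simpa [sub_eq_add_neg, Pi.add_def] using this
    · intro t ht
      have h1t : (0:ℝ) < 1 + t := by linarith
      have hbd : a t ^ (2-3*γ) ≤ (δ * (1+t)) ^ (2-3*γ) :=
        Real.rpow_le_rpow_of_nonpos (mul_pos hδpos h1t) (hδ t ht) hp.le
      rw [Real.mul_rpow hδpos.le h1t.le] at hbd
      linarith
  have hgpos : ∀ t ≥ (0:ℝ), 0 < C * (1+t)^(3-3*γ) := by
    intro t ht
    exact mul_pos hCpos (rpow_pos_of_pos (by linarith) _)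
  -- the asymptotic velocity a₁
  have hbdd : BddAbove (a' '' Set.Ici 0) := by
    refine ⟨a' 0 + C * (1+0)^(3-3*γ), ?_⟩
    rintro y ⟨s, hs, rfl⟩
    have h1 : a' s ≤ a' s + C * (1+s)^(3-3*γ) := by linarith [hgpos s hs]
    have h2 : a' s + C * (1+s)^(3-3*γ) ≤ a' 0 + C * (1+0)^(3-3*γ) :=
      hhanti Set.self_mem_Ici hs hs
    linarith
  set a₁ := sSup (a' '' Set.Ici 0) with ha1def
  have hle1 : ∀ t ≥ (0:ℝ), a' t ≤ a₁ := fun t ht => le_csSup hbdd ⟨t, ht, rfl⟩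
  have hub : ∀ t ≥ (0:ℝ), a₁ ≤ a' t + C * (1+t)^(3-3*γ) := by
    intro t ht
    apply csSup_le (Set.nonempty_Ici.image a')
    rintro y ⟨s, hs, rfl⟩
    rcases le_total s t with h | h
    · have : a' s ≤ a' t := hmono' hs (le_trans hs h) h
      linarith [hgpos t ht]
    · have : a' s + C * (1+s)^(3-3*γ) ≤ a' t + C * (1+t)^(3-3*γ) := hhanti ht hs h
      linarith [hgpos s hs]
  have ha1pos : 0 < a₁ := lt_of_lt_of_le ht0pos (hle1 t0 ht0)
  have hkey : ∀ t ≥ (0:ℝ), |a' t - a₁| ≤ C * (1+t)^(3-3*γ) := by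
    intro t ht
    rw [abs_of_nonpos (by linarith [hle1 t ht])]
    linarith [hub t ht]
  -- the remainder m
  have hm' : ∀ t ≥ (0:ℝ), HasDerivAt (fun s => a s - a 0 - s*a₁) (a' t - a₁) t := by
    intro t ht
    exact ((hda t ht).sub_const _).sub (by simpa using (hasDerivAt_id t).mul_const a₁)
  have hmanti : AntitoneOn (fun s => a s - a 0 - s*a₁) (Set.Ici 0) :=
    myAntiOn _ _ 0 hm' (fun t ht => by linarith [hle1 t ht])
  have hmle : ∀ t ≥ (0:ℝ), a t - a 0 - t*a₁ ≤ 0 := by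
    intro t ht
    have := hmanti Set.self_mem_Ici ht ht
    simpa using this
  -- lower bound on m via the second comparison function G
  have h3γ4 : (0:ℝ) < 3*γ - 4 := by linarith
  set D := C / (3*γ-4) with hDdef
  have hDpos : 0 < D := div_pos hCpos h3γ4
  have hG' : ∀ t ≥ (0:ℝ), HasDerivAt (fun s => D * (1+s)^(4-3*γ))
      (-(C * (1+t)^(3-3*γ))) t := by
    intro t ht
    have h1t : (0:ℝ) < 1 + t := by linarith
    have hder := (myDerivPow (4-3*γ) t h1t).const_mul D
    have heq : D * ((4-3*γ) * (1+t)^(4-3*γ-1)) = -(C * (1+t)^(3-3*γ)) := by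
      have : (4-3*γ-1 : ℝ) = 3-3*γ := by ring
      rw [this, hDdef]
      field_simp
      ring
    rw [heq] at hder
    exact hder
  have hφmono : MonotoneOn (fun s => (a s - a 0 - s*a₁) - D * (1+s)^(4-3*γ)) (Set.Ici 0) := by
    apply myMonoOn _ (fun s => (a' s - a₁) - (-(C * (1+s)^(3-3*γ)))) 0
    · intro t ht
      exact (hm' t ht).sub (hG' t ht)
    · intro t ht
      have := hkey t ht
      rw [abs_of_nonpos (by linarith [hle1 t ht])] at this
      linarith
  have hGpos : ∀ t ≥ (0:ℝ), 0 < D * (1+t)^(4-3*γ) := by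
    intro t ht
    exact mul_pos hDpos (rpow_pos_of_pos (by linarith) _)
  set M := D * (1+0)^(4-3*γ) with hMdef
  have hMpos : 0 < M := hGpos 0 le_rfl
  have hmabs : ∀ t ≥ (0:ℝ), |a t - a 0 - t*a₁| ≤ M := by
    intro t ht
    have h1 := hφmono Set.self_mem_Ici ht ht
    simp only [zero_mul, sub_zero] at h1
    have h2 := hmle t ht
    have h3 := hGpos t ht
    rw [abs_le]
    constructor
    · simp only [hα] at h1 ⊢
      nlinarith [hα]
    · linarith [hMpos]
  -- conclusions
  refine ⟨a 0, a₁, ha1pos, ⟨C, hCpos, hkey⟩, ?_, ?_⟩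
  · apply squeeze_zero_norm' (a := fun t => M / (1+t))
    · filter_upwards [eventually_ge_atTop (0:ℝ)] with t ht
      have h1t : (0:ℝ) < 1 + t := by linarith
      rw [Real.norm_eq_abs, abs_div, abs_of_pos h1t]
      exact div_le_div_of_nonneg_right (hmabs t ht) h1t.le |>.trans_eq rfl
    · exact tendsto_const_nhds.div_atTop (tendsto_atTop_add_const_left _ 1 tendsto_id)
  · have hsub : Tendsto (fun t => a t / t - a₁) atTop (nhds 0) := by
      apply squeeze_zero_norm' (a := fun t => (|a 0| + M) / t)
      · filter_upwards [eventually_ge_atTop (1:ℝ)] with t ht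
        have htpos : (0:ℝ) < t := by linarith
        have heq : a t / t - a₁ = (a 0 + (a t - a 0 - t*a₁)) / t := by
          field_simp
          ring
        rw [Real.norm_eq_abs, heq, abs_div, abs_of_pos htpos]
        apply div_le_div_of_nonneg_right _ htpos.le
        calc |a 0 + (a t - a 0 - t*a₁)| ≤ |a 0| + |a t - a 0 - t*a₁| := abs_add_le _ _
          _ ≤ |a 0| + M := by linarith [hmabs t (by linarith : t ≥ (0:ℝ))]
      · exact tendsto_const_nhds.div_atTop tendsto_id
    have := hsub.add_const a₁
    simpa using this
end
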